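/- Amplification factor bound for the first stage of the ARS(2,2,2) scheme: let β = 1 − √2/2, let σ_e ≥ 0 with β σ_e ≤ 1, let σ_i ≥ 0, and let c, s ∈ ℝ with c² + s² = 1. Setting z = (1 − c) + i s ∈ ℂ and f = (1 − β σ_e z)/(1 + β σ_i z), one has |1 − β σ_e z|² = 1 − 2 β σ_e (1 − c)(1 − β σ_e) and |f| ≤ 1. -/

import Mathlib

/-- Amplification factor bound for the first stage of the ARS(2,2,2) scheme:
with `z = (1 - c) + i s` on a Fourier mode, the modulus of the numerator
satisfies the given identity and the stage amplification factor has modulus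
at most one. -/
theorem ARS222_first_stage_amplification (β σe σi c s : ℝ)
    (hβ : β = 1 - Real.sqrt 2 / 2)
    (hσe : 0 ≤ σe) (hCFL : β * σe ≤ 1) (hσi : 0 ≤ σi)
    (hcs : c ^ 2 + s ^ 2 = 1) :
    ‖(1 - (β : ℂ) * (σe : ℂ) * ((1 - (c : ℂ)) + (s : ℂ) * Complex.I))‖ ^ 2
      = 1 - 2 * β * σe * (1 - c) * (1 - β * σe) ∧
    ‖((1 - (β : ℂ) * (σe : ℂ) * ((1 - (c : ℂ)) + (s : ℂ) * Complex.I))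
      / (1 + (β : ℂ) * (σi : ℂ) * ((1 - (c : ℂ)) + (s : ℂ) * Complex.I)))‖ ≤ 1 := by
  have hβ0 : 0 ≤ β := by
    have h2 : Real.sqrt 2 ^ 2 = 2 := Real.sq_sqrt (by norm_num)
    nlinarith [Real.sqrt_nonneg 2]
  have hc1 : c ≤ 1 := by nlinarith [sq_nonneg s]
  have hnum : ‖(1 - (β : ℂ) * (σe : ℂ) * ((1 - (c : ℂ)) + (s : ℂ) * Complex.I))‖ ^ 2
      = 1 - 2 * β * σe * (1 - c) * (1 - β * σe) := by
    rw [Complex.sq_norm, Complex.normSq_apply]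
    simp [Complex.add_re, Complex.add_im, Complex.mul_re, Complex.mul_im]
    linear_combination β^2*σe^2*hcs
  refine ⟨hnum, ?_⟩
  have hden : ‖(1 + (β : ℂ) * (σi : ℂ) * ((1 - (c : ℂ)) + (s : ℂ) * Complex.I))‖ ^ 2
      = 1 + 2 * β * σi * (1 - c) * (1 + β * σi) := by
    rw [Complex.sq_norm, Complex.normSq_apply]
    simp [Complex.add_re, Complex.add_im, Complex.mul_re, Complex.mul_im]
    linear_combination β^2*σi^2*hcs
  have h1c : (0:ℝ) ≤ 1 - c := by linarith
  have hden1 : 1 ≤ ‖(1 + (β : ℂ) * (σi : ℂ) * ((1 - (c : ℂ)) + (s : ℂ) * Complex.I))‖ := by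
    have : (1:ℝ) ≤ ‖(1 + (β : ℂ) * (σi : ℂ) * ((1 - (c : ℂ)) + (s : ℂ) * Complex.I))‖ ^ 2 := by
      rw [hden]; nlinarith [mul_nonneg (mul_nonneg (mul_nonneg hβ0 hσi) h1c) (by nlinarith [mul_nonneg hβ0 hσi] : (0:ℝ) ≤ 1 + β*σi)]
    nlinarith [norm_nonneg (1 + (β : ℂ) * (σi : ℂ) * ((1 - (c : ℂ)) + (s : ℂ) * Complex.I))]
  have hnum1 : ‖(1 - (β : ℂ) * (σe : ℂ) * ((1 - (c : ℂ)) + (s : ℂ) * Complex.I))‖ ≤ 1 := by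
    have h1 : ‖(1 - (β : ℂ) * (σe : ℂ) * ((1 - (c : ℂ)) + (s : ℂ) * Complex.I))‖ ^ 2 ≤ 1 := by
      rw [hnum]; nlinarith [mul_nonneg (mul_nonneg (mul_nonneg hβ0 hσe) h1c) (by linarith : (0:ℝ) ≤ 1 - β*σe)]
    nlinarith [norm_nonneg (1 - (β : ℂ) * (σe : ℂ) * ((1 - (c : ℂ)) + (s : ℂ) * Complex.I))]
  rw [norm_div, div_le_one (lt_of_lt_of_le one_pos hden1)]
  exact hnum1.trans hden1
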